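/- Exact full-data remainder (double-robustness identity) for the ATE: assume g₀∘W is a version of μ[A | σ(W)], Q₀(A,W) is a version of μ[Y | σ(A,W)], and 0 < g_P(w) < 1 for all w. Then, provided all displayed integrands are integrable, ∫ [ H_{g_P}(A,W)·(Y − Q_P(A,W)) + Q_P(1,W) − Q_P(0,W) ] dμ − ∫ [ Q₀(1,W) − Q₀(0,W) ] dμ = ∫ [ ((g_P − g₀)/g_P)(W)·(Q_P − Q₀)(1,W) + ((g_P − g₀)/(1 − g_P))(W)·(Q_P − Q₀)(0,W) ] dμ. (Writing g_P(1|w) = g_P(w) and g_P(0|w) = 1 − g_P(w), the right-hand side equals the paper's form ∫ ((g_P − g₀)/g_P)(1|W)(Q_P − Q₀)(1,W) − ((g_P − g₀)/g_P)(0|W)(Q_P − Q₀)(0,W) dμ.) -/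

import Mathlib

open MeasureTheory

/-- The ATE clever covariate `H_g(a,w) = a/g(w) − (1−a)/(1−g(w))`. -/
noncomputable def Hg {𝒲 : Type*} (g : 𝒲 → ℝ) (a : ℝ) (w : 𝒲) : ℝ :=
  a / g w - (1 - a) / (1 - g w)

/-- Exact full-data remainder (double-robustness identity) for the ATE:
`∫ [H_{g_P}(A,W)(Y − Q_P(A,W)) + Q_P(1,W) − Q_P(0,W)] dμ − ∫ [Q₀(1,W) − Q₀(0,W)] dμ
 = ∫ [((g_P − g₀)/g_P)(W)(Q_P − Q₀)(1,W) + ((g_P − g₀)/(1 − g_P))(W)(Q_P − Q₀)(0,W)] dμ`. -/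
theorem exact_fulldata_remainder_ATE {Ω 𝒲 : Type*}
    {mΩ : MeasurableSpace Ω} [MeasurableSpace 𝒲]
    (μ : Measure Ω) [IsProbabilityMeasure μ]
    (W : Ω → 𝒲) (hW : Measurable W)
    (A : Ω → ℝ) (hA : Measurable A) (hA01 : ∀ ω, A ω = 0 ∨ A ω = 1)
    (Y : Ω → ℝ) (hY : Integrable Y μ)
    (gP g₀ : 𝒲 → ℝ) (hgP : Measurable gP) (hg₀ : Measurable g₀)
    (QP Q₀ : ℝ → 𝒲 → ℝ)
    (hQP : Measurable (Function.uncurry QP)) (hQ₀ : Measurable (Function.uncurry Q₀))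
    (hg₀ver : (fun ω => g₀ (W ω)) =ᵐ[μ] μ[A | MeasurableSpace.comap W inferInstance])
    (hQ₀ver : (fun ω => Q₀ (A ω) (W ω))
      =ᵐ[μ] μ[Y | MeasurableSpace.comap (fun ω => (A ω, W ω)) inferInstance])
    (hgPbd : ∀ w, 0 < gP w ∧ gP w < 1)
    (hint1 : Integrable (fun ω => Hg gP (A ω) (W ω) * (Y ω - QP (A ω) (W ω))) μ)
    (hint2 : Integrable (fun ω => QP 1 (W ω) - QP 0 (W ω)) μ)
    (hint3 : Integrable (fun ω => Q₀ 1 (W ω) - Q₀ 0 (W ω)) μ)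
    (hint4 : Integrable
      (fun ω => ((gP (W ω) - g₀ (W ω)) / gP (W ω)) * (QP 1 (W ω) - Q₀ 1 (W ω))) μ)
    (hint5 : Integrable
      (fun ω => ((gP (W ω) - g₀ (W ω)) / (1 - gP (W ω))) * (QP 0 (W ω) - Q₀ 0 (W ω))) μ) :
    (∫ ω, (Hg gP (A ω) (W ω) * (Y ω - QP (A ω) (W ω)) + QP 1 (W ω) - QP 0 (W ω)) ∂μ)
      - ∫ ω, (Q₀ 1 (W ω) - Q₀ 0 (W ω)) ∂μ
    = ∫ ω, (((gP (W ω) - g₀ (W ω)) / gP (W ω)) * (QP 1 (W ω) - Q₀ 1 (W ω))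
        + ((gP (W ω) - g₀ (W ω)) / (1 - gP (W ω))) * (QP 0 (W ω) - Q₀ 0 (W ω))) ∂μ := by
  have hgpos : ∀ w, (0:ℝ) < gP w := fun w => (hgPbd w).1
  have hg1pos : ∀ w, (0:ℝ) < 1 - gP w := fun w => sub_pos.mpr (hgPbd w).2
  have hgne : ∀ w, gP w ≠ 0 := fun w => (hgpos w).ne'
  have hgne1 : ∀ w, (1:ℝ) - gP w ≠ 0 := fun w => (hg1pos w).ne'
  set m1 := MeasurableSpace.comap (fun ω => (A ω, W ω)) inferInstance with hm1def
  have hm1 : m1 ≤ mΩ := measurable_iff_comap_le.mp (hA.prodMk hW)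
  set m2 := MeasurableSpace.comap W inferInstance with hm2def
  have hm2 : m2 ≤ mΩ := measurable_iff_comap_le.mp hW
  have hAWm1 : Measurable[m1] (fun ω => (A ω, W ω)) := measurable_iff_comap_le.mpr le_rfl
  have hWm2 : Measurable[m2] W := measurable_iff_comap_le.mpr le_rfl
  -- section measurability
  have hQ1 : ∀ (Q : ℝ → 𝒲 → ℝ), Measurable (Function.uncurry Q) →
      ∀ a : ℝ, Measurable (fun w => Q a w) := fun Q hQ a =>
    hQ.comp (measurable_const.prodMk measurable_id)
  have hQP1 := hQ1 QP hQP 1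
  have hQP0 := hQ1 QP hQP 0
  have hQ₀1 := hQ1 Q₀ hQ₀ 1
  have hQ₀0 := hQ1 Q₀ hQ₀ 0
  have hHmeas : Measurable (fun p : ℝ × 𝒲 => Hg gP p.1 p.2) := by
    unfold Hg
    exact (measurable_fst.div (hgP.comp measurable_snd)).sub
      ((measurable_const.sub measurable_fst).div
        (measurable_const.sub (hgP.comp measurable_snd)))
  have hHm1 : StronglyMeasurable[m1] (fun ω => Hg gP (A ω) (W ω)) :=
    (hHmeas.comp hAWm1).stronglyMeasurable
  have hQPm1 : StronglyMeasurable[m1] (fun ω => QP (A ω) (W ω)) :=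
    (hQP.comp hAWm1).stronglyMeasurable
  -- |H| ≥ 1
  have hHge1 : ∀ ω, (1:ℝ) ≤ |Hg gP (A ω) (W ω)| := by
    intro ω
    rcases hA01 ω with h | h
    · have h1 : Hg gP (A ω) (W ω) = -(1 / (1 - gP (W ω))) := by
        simp [Hg, h]
      rw [h1, abs_neg, abs_of_pos (div_pos one_pos (hg1pos (W ω)))]
      rw [le_div_iff₀ (hg1pos (W ω))]
      nlinarith [hgpos (W ω)]
    · have h1 : Hg gP (A ω) (W ω) = 1 / gP (W ω) := by
        simp [Hg, h]
      rw [h1, abs_of_pos (div_pos one_pos (hgpos (W ω)))]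
      rw [le_div_iff₀ (hgpos (W ω))]
      nlinarith [(hgPbd (W ω)).2]
  -- integrability of G := Y - QP(A,W)
  have hGmeas : AEStronglyMeasurable[mΩ] (fun ω => Y ω - QP (A ω) (W ω)) μ :=
    hY.aestronglyMeasurable.sub (hQP.comp (hA.prodMk hW)).aestronglyMeasurable
  have hGint : Integrable (fun ω => Y ω - QP (A ω) (W ω)) μ := by
    refine hint1.mono hGmeas (ae_of_all _ fun ω => ?_)
    have h0 : ‖Y ω - QP (A ω) (W ω)‖ = |Y ω - QP (A ω) (W ω)| := rfl
    rw [h0, Real.norm_eq_abs, abs_mul]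
    nlinarith [hHge1 ω, abs_nonneg (Y ω - QP (A ω) (W ω)),
      abs_nonneg (Hg gP (A ω) (W ω))]
  have hQPAWint : Integrable (fun ω => QP (A ω) (W ω)) μ := by
    exact (hY.sub hGint).congr (Filter.Eventually.of_forall fun ω => by
      simp [Pi.sub_apply])
  -- Step 1: condition on m1
  have hpull : μ[(fun ω => Hg gP (A ω) (W ω)) * (fun ω => Y ω - QP (A ω) (W ω)) | m1]
      =ᵐ[μ] (fun ω => Hg gP (A ω) (W ω)) * μ[(fun ω => Y ω - QP (A ω) (W ω)) | m1] :=
    condExp_mul_of_stronglyMeasurable_left hHm1 hint1 hGint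
  have hcondG : μ[(fun ω => Y ω - QP (A ω) (W ω)) | m1]
      =ᵐ[μ] fun ω => Q₀ (A ω) (W ω) - QP (A ω) (W ω) := by
    have h1 : μ[(fun ω => Y ω - QP (A ω) (W ω)) | m1]
        =ᵐ[μ] μ[Y | m1] - μ[(fun ω => QP (A ω) (W ω)) | m1] := condExp_sub hY hQPAWint m1
    have h2 : μ[(fun ω => QP (A ω) (W ω)) | m1] = fun ω => QP (A ω) (W ω) :=
      condExp_of_stronglyMeasurable hm1 hQPm1 hQPAWint
    filter_upwards [h1, hQ₀ver] with ω hω hω2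
    rw [hω, Pi.sub_apply, h2, ← hω2]
  have hTae : (fun ω => Hg gP (A ω) (W ω) * (Q₀ (A ω) (W ω) - QP (A ω) (W ω)))
      =ᵐ[μ] μ[(fun ω => Hg gP (A ω) (W ω)) * (fun ω => Y ω - QP (A ω) (W ω)) | m1] := by
    filter_upwards [hpull, hcondG] with ω h1 h2
    rw [h1, Pi.mul_apply, h2]
  have hTint : Integrable
      (fun ω => Hg gP (A ω) (W ω) * (Q₀ (A ω) (W ω) - QP (A ω) (W ω))) μ :=
    integrable_condExp.congr hTae.symm
  have hI1 : ∫ ω, Hg gP (A ω) (W ω) * (Y ω - QP (A ω) (W ω)) ∂μ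
      = ∫ ω, Hg gP (A ω) (W ω) * (Q₀ (A ω) (W ω) - QP (A ω) (W ω)) ∂μ := by
    rw [integral_congr_ae hTae, integral_condExp hm1]
    rfl
  -- Step 2: split by the value of A
  set S₁ := fun ω => (Q₀ 1 (W ω) - QP 1 (W ω)) / gP (W ω) * A ω with hS₁def
  set S₀ := fun ω => (Q₀ 0 (W ω) - QP 0 (W ω)) / (1 - gP (W ω)) * (1 - A ω) with hS₀def
  have hTS : ∀ ω, Hg gP (A ω) (W ω) * (Q₀ (A ω) (W ω) - QP (A ω) (W ω))
      = S₁ ω - S₀ ω := by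
    intro ω
    rcases hA01 ω with h | h <;> simp [Hg, hS₁def, hS₀def, h] <;> ring
  have hS₁int : Integrable S₁ μ := by
    refine hTint.mono
      ((((hQ₀1.comp hW).sub (hQP1.comp hW)).div (hgP.comp hW)).mul hA).aestronglyMeasurable
      (ae_of_all _ fun ω => ?_)
    rcases hA01 ω with h | h
    · simp only [hS₁def, h, mul_zero, norm_zero]
      positivity
    · have hT : Hg gP (A ω) (W ω) * (Q₀ (A ω) (W ω) - QP (A ω) (W ω)) = S₁ ω := by
        rw [hTS ω]; simp [hS₀def, h]
      rw [hT]
  have hS₀int : Integrable S₀ μ := by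
    refine hTint.mono
      ((((hQ₀0.comp hW).sub (hQP0.comp hW)).div
        (measurable_const.sub (hgP.comp hW))).mul (measurable_const.sub hA)).aestronglyMeasurable
      (ae_of_all _ fun ω => ?_)
    rcases hA01 ω with h | h
    · have hT : Hg gP (A ω) (W ω) * (Q₀ (A ω) (W ω) - QP (A ω) (W ω)) = -S₀ ω := by
        rw [hTS ω]; simp [hS₁def, h]
      rw [hT, norm_neg]
    · simp only [hS₀def, h, sub_self, mul_zero, norm_zero]
      positivity
  have hI2 : ∫ ω, Hg gP (A ω) (W ω) * (Q₀ (A ω) (W ω) - QP (A ω) (W ω)) ∂μ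
      = ∫ ω, S₁ ω ∂μ - ∫ ω, S₀ ω ∂μ := by
    rw [← integral_sub hS₁int hS₀int]
    exact integral_congr_ae (ae_of_all _ fun ω => hTS ω)
  -- Step 3: condition on m2
  have hAint : Integrable A μ := by
    refine (integrable_const (1:ℝ)).mono' hA.aestronglyMeasurable (ae_of_all _ fun ω => ?_)
    rcases hA01 ω with h | h <;> simp [h]
  have hBint : Integrable (fun ω => 1 - A ω) μ := (integrable_const (1:ℝ)).sub hAint
  have hf₂m2 : StronglyMeasurable[m2] (fun ω => (Q₀ 1 (W ω) - QP 1 (W ω)) / gP (W ω)) :=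
    (((hQ₀1.sub hQP1).div hgP).comp hWm2).stronglyMeasurable
  have hf₃m2 : StronglyMeasurable[m2]
      (fun ω => (Q₀ 0 (W ω) - QP 0 (W ω)) / (1 - gP (W ω))) :=
    (((hQ₀0.sub hQP0).div (measurable_const.sub hgP)).comp hWm2).stronglyMeasurable
  have hpull2 : μ[(fun ω => (Q₀ 1 (W ω) - QP 1 (W ω)) / gP (W ω)) * A | m2]
      =ᵐ[μ] (fun ω => (Q₀ 1 (W ω) - QP 1 (W ω)) / gP (W ω)) * μ[A | m2] :=
    condExp_mul_of_stronglyMeasurable_left hf₂m2 hS₁int hAint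
  have hpull3 : μ[(fun ω => (Q₀ 0 (W ω) - QP 0 (W ω)) / (1 - gP (W ω)))
        * (fun ω => 1 - A ω) | m2]
      =ᵐ[μ] (fun ω => (Q₀ 0 (W ω) - QP 0 (W ω)) / (1 - gP (W ω)))
        * μ[(fun ω => 1 - A ω) | m2] :=
    condExp_mul_of_stronglyMeasurable_left hf₃m2 hS₀int hBint
  have hcondB : μ[(fun ω => 1 - A ω) | m2] =ᵐ[μ] fun ω => 1 - g₀ (W ω) := by
    have h1 : μ[(fun ω => (1:ℝ)) - A | m2] =ᵐ[μ] μ[(fun ω => (1:ℝ)) | m2] - μ[A | m2] :=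
      condExp_sub (integrable_const (1:ℝ)) hAint m2
    have h2 : μ[(fun ω : Ω => (1:ℝ)) | m2] = fun ω => (1:ℝ) := condExp_const hm2 (1:ℝ)
    filter_upwards [h1, hg₀ver] with ω hω hω2
    have : ((fun ω : Ω => (1:ℝ)) - A) = fun ω => 1 - A ω := rfl
    rw [← this, hω, Pi.sub_apply, h2, ← hω2]
  have hg₁ae : (fun ω => (Q₀ 1 (W ω) - QP 1 (W ω)) / gP (W ω) * g₀ (W ω))
      =ᵐ[μ] μ[(fun ω => (Q₀ 1 (W ω) - QP 1 (W ω)) / gP (W ω)) * A | m2] := by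
    filter_upwards [hpull2, hg₀ver] with ω h1 h2
    rw [h1, Pi.mul_apply, ← h2]
  have hg₀ae : (fun ω => (Q₀ 0 (W ω) - QP 0 (W ω)) / (1 - gP (W ω)) * (1 - g₀ (W ω)))
      =ᵐ[μ] μ[(fun ω => (Q₀ 0 (W ω) - QP 0 (W ω)) / (1 - gP (W ω)))
        * (fun ω => 1 - A ω) | m2] := by
    filter_upwards [hpull3, hcondB] with ω h1 h2
    rw [h1, Pi.mul_apply, h2]
  have hG1int : Integrable (fun ω => (Q₀ 1 (W ω) - QP 1 (W ω)) / gP (W ω) * g₀ (W ω)) μ :=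
    integrable_condExp.congr hg₁ae.symm
  have hG0int : Integrable
      (fun ω => (Q₀ 0 (W ω) - QP 0 (W ω)) / (1 - gP (W ω)) * (1 - g₀ (W ω))) μ :=
    integrable_condExp.congr hg₀ae.symm
  have hE₁ : ∫ ω, (Q₀ 1 (W ω) - QP 1 (W ω)) / gP (W ω) * g₀ (W ω) ∂μ
      = ∫ ω, S₁ ω ∂μ := by
    rw [integral_congr_ae hg₁ae, integral_condExp hm2]; rfl
  have hE₀ : ∫ ω, (Q₀ 0 (W ω) - QP 0 (W ω)) / (1 - gP (W ω)) * (1 - g₀ (W ω)) ∂μ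
      = ∫ ω, S₀ ω ∂μ := by
    rw [integral_congr_ae hg₀ae, integral_condExp hm2]; rfl
  -- Assemble
  have hsplit : (fun ω => Hg gP (A ω) (W ω) * (Y ω - QP (A ω) (W ω))
        + QP 1 (W ω) - QP 0 (W ω))
      = fun ω => Hg gP (A ω) (W ω) * (Y ω - QP (A ω) (W ω))
        + (QP 1 (W ω) - QP 0 (W ω)) := by
    funext ω; ring
  have hG10int : Integrable (fun ω => (Q₀ 1 (W ω) - QP 1 (W ω)) / gP (W ω) * g₀ (W ω)
      - (Q₀ 0 (W ω) - QP 0 (W ω)) / (1 - gP (W ω)) * (1 - g₀ (W ω))) μ :=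
    hG1int.sub hG0int
  have hG10int2 : Integrable (fun ω => ((Q₀ 1 (W ω) - QP 1 (W ω)) / gP (W ω) * g₀ (W ω)
      - (Q₀ 0 (W ω) - QP 0 (W ω)) / (1 - gP (W ω)) * (1 - g₀ (W ω)))
      + (QP 1 (W ω) - QP 0 (W ω))) μ := hG10int.add hint2
  rw [hsplit, integral_add hint1 hint2, hI1, hI2, ← hE₁, ← hE₀,
    ← integral_sub hG1int hG0int, ← integral_add hG10int hint2,
    ← integral_sub hG10int2 hint3]
  refine integral_congr_ae (ae_of_all _ fun ω => ?_)
  field_simp [hgne (W ω), hgne1 (W ω)]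
  ring
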